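/- For all real x > 0, 2·(sinh x)/x + (tanh x)/x > 2·x/(sinh x) + x/(tanh x) > 3. -/

import Mathlib

open Real

private lemma deriv_pos_aux {f f' : ℝ → ℝ} (hd : ∀ x, HasDerivAt f (f' x) x)
    (h0 : f 0 = 0) (hp : ∀ x, 0 < x → 0 < f' x) : ∀ x, 0 < x → 0 < f x := by
  intro x hx
  have hmono : StrictMonoOn f (Set.Ici 0) := by
    apply strictMonoOn_of_deriv_pos (convex_Ici 0)
    · exact fun y _ => ((hd y).differentiableAt.continuousAt).continuousWithinAt
    · intro y hy
      rw [interior_Ici, Set.mem_Ioi] at hy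
      rw [(hd y).deriv]
      exact hp y hy
  have := hmono (Set.mem_Ici.2 le_rfl) (Set.mem_Ici.2 hx.le) hx
  rwa [h0] at this

private lemma sinh_lt_mul_cosh {x : ℝ} (hx : 0 < x) : Real.sinh x < x * Real.cosh x := by
  have h := deriv_pos_aux (f := fun y => y * Real.cosh y - Real.sinh y)
    (f' := fun y => y * Real.sinh y)
    (fun y => by
      have h1 := ((hasDerivAt_id y).mul (Real.hasDerivAt_cosh y)).sub (Real.hasDerivAt_sinh y)
      convert h1 using 1
      all_goals try with_reducible_and_instances rfl
      all_goals try (funext z; rfl)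
      all_goals simp only [id_eq, Pi.mul_apply, Pi.add_apply, Pi.sub_apply, Pi.pow_apply]; push_cast; ring)
    (by simp)
    (fun y hy => mul_pos hy (Real.sinh_pos_iff.2 hy)) x hx
  have h' : 0 < x * Real.cosh x - Real.sinh x := h
  linarith

private lemma sq_lt_two_cosh_sub {x : ℝ} (hx : 0 < x) : x ^ 2 < 2 * (Real.cosh x - 1) := by
  have h2 : x / 2 < Real.sinh (x / 2) := Real.self_lt_sinh_iff.2 (by linarith)
  have h1 : Real.cosh (x / 2) ^ 2 = Real.sinh (x / 2) ^ 2 + 1 := Real.cosh_sq (x / 2)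
  have h5 := Real.cosh_two_mul (x / 2)
  rw [show 2 * (x / 2) = x by ring] at h5
  nlinarith [h2, hx, h1, h5]

theorem huygens_hyperbolic_refined (x : ℝ) (hx : 0 < x) :
    2 * (Real.sinh x) / x + (Real.tanh x) / x > 2 * x / (Real.sinh x) + x / (Real.tanh x) ∧
    2 * x / (Real.sinh x) + x / (Real.tanh x) > 3 := by
  have hs : 0 < Real.sinh x := Real.sinh_pos_iff.2 hx
  have hc : (1:ℝ) < Real.cosh x := Real.one_lt_cosh.2 hx.ne'
  have hc0 : (0:ℝ) < Real.cosh x := by linarith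
  have ht : Real.tanh x = Real.sinh x / Real.cosh x := Real.tanh_eq_sinh_div_cosh x
  -- Part 2: x * (2 + cosh x) - 3 * sinh x > 0
  have key2 : 0 < x * (2 + Real.cosh x) - 3 * Real.sinh x := by
    have hd1 : ∀ y : ℝ, 0 < y → 0 < 2 - 2 * Real.cosh y + y * Real.sinh y := by
      refine deriv_pos_aux (f' := fun y => y * Real.cosh y - Real.sinh y) ?_ (by simp) ?_
      · intro y
        have h1 := ((hasDerivAt_const y (2:ℝ)).sub ((Real.hasDerivAt_cosh y).const_mul 2)).add
          ((hasDerivAt_id y).mul (Real.hasDerivAt_sinh y))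
        convert h1 using 1
        all_goals try with_reducible_and_instances rfl
        all_goals try (funext z; rfl)
        all_goals simp only [id_eq, Pi.mul_apply, Pi.add_apply, Pi.sub_apply, Pi.pow_apply]; push_cast; ring
      · intro y hy
        show 0 < y * Real.cosh y - Real.sinh y
        linarith [sinh_lt_mul_cosh hy]
    have h := deriv_pos_aux (f := fun y => y * (2 + Real.cosh y) - 3 * Real.sinh y)
      (f' := fun y => 2 - 2 * Real.cosh y + y * Real.sinh y)
      (fun y => by
        have h1 := ((hasDerivAt_id y).mul ((hasDerivAt_const y (2:ℝ)).add
          (Real.hasDerivAt_cosh y))).sub ((Real.hasDerivAt_sinh y).const_mul 3)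
        convert h1 using 1
        all_goals try with_reducible_and_instances rfl
        all_goals try (funext z; rfl)
        all_goals simp only [id_eq, Pi.mul_apply, Pi.add_apply, Pi.sub_apply, Pi.pow_apply]; push_cast; ring)
      (by simp) hd1 x hx
    exact h
  -- Part 1: F x > 0 where F = 2 s^2 c + s^2 - x^2 c^2 - 2 x^2 c
  have keyF : 0 < 2 * Real.sinh x ^ 2 * Real.cosh x + Real.sinh x ^ 2
      - x ^ 2 * Real.cosh x ^ 2 - 2 * x ^ 2 * Real.cosh x := by
    have hF2 : ∀ y : ℝ, 0 < y →
        0 < 4 * Real.cosh y ^ 3 + 14 * Real.sinh y ^ 2 * Real.cosh y + 2 * Real.sinh y ^ 2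
          - 8 * y * Real.cosh y * Real.sinh y - 2 * y ^ 2 * Real.sinh y ^ 2
          - 2 * y ^ 2 * Real.cosh y ^ 2 - 4 * Real.cosh y - 8 * y * Real.sinh y
          - 2 * y ^ 2 * Real.cosh y := by
      intro y hy
      have h1 : y < Real.sinh y := Real.self_lt_sinh_iff.2 hy
      have h2 : y ^ 2 < 2 * (Real.cosh y - 1) := sq_lt_two_cosh_sub hy
      have h3 : Real.cosh y ^ 2 = Real.sinh y ^ 2 + 1 := Real.cosh_sq y
      have h4 : (1:ℝ) < Real.cosh y := Real.one_lt_cosh.2 hy.ne'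
      have h5 : 0 < Real.sinh y := Real.sinh_pos_iff.2 hy
      have hc0' : (0:ℝ) < Real.cosh y := by linarith
      have hcs : 0 < Real.cosh y * Real.sinh y := mul_pos hc0' h5
      have hA : y * (Real.cosh y * Real.sinh y) < Real.sinh y * (Real.cosh y * Real.sinh y) :=
        mul_lt_mul_of_pos_right h1 hcs
      have hB : y * Real.sinh y < Real.sinh y * Real.sinh y := mul_lt_mul_of_pos_right h1 h5
      have hC : y ^ 2 * Real.sinh y ^ 2 ≤ 2 * (Real.cosh y - 1) * Real.sinh y ^ 2 :=
        mul_le_mul_of_nonneg_right h2.le (sq_nonneg _)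
      have hD : y ^ 2 * Real.cosh y ^ 2 ≤ 2 * (Real.cosh y - 1) * Real.cosh y ^ 2 :=
        mul_le_mul_of_nonneg_right h2.le (sq_nonneg _)
      have hE : y ^ 2 * Real.cosh y ≤ 2 * (Real.cosh y - 1) * Real.cosh y :=
        mul_le_mul_of_nonneg_right h2.le hc0'.le
      have hF : 0 < Real.sinh y ^ 2 * (Real.cosh y - 1) :=
        mul_pos (by positivity) (by linarith)
      nlinarith [hA, hB, hC, hD, hE, hF, h3]
    have hF1 : ∀ y : ℝ, 0 < y →
        0 < 4 * Real.sinh y * Real.cosh y ^ 2 + 2 * Real.sinh y ^ 3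
          + 2 * Real.sinh y * Real.cosh y - 2 * y * Real.cosh y ^ 2
          - 2 * y ^ 2 * Real.cosh y * Real.sinh y - 4 * y * Real.cosh y
          - 2 * y ^ 2 * Real.sinh y := by
      refine deriv_pos_aux ?_ (by simp) hF2
      intro y
      have hsy := Real.hasDerivAt_sinh y
      have hcy := Real.hasDerivAt_cosh y
      have hid := hasDerivAt_id y
      have h1 := (((((((hsy.const_mul 4).mul (hcy.pow 2)).add ((hsy.pow 3).const_mul 2)).add
        ((hsy.const_mul 2).mul hcy)).sub ((hid.const_mul 2).mul (hcy.pow 2))).sub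
        ((((hid.pow 2).const_mul 2).mul hcy).mul hsy)).sub ((hid.const_mul 4).mul hcy)).sub
        (((hid.pow 2).const_mul 2).mul hsy)
      convert h1 using 1
      all_goals try with_reducible_and_instances rfl
      all_goals try (funext z; rfl)
      all_goals simp only [id_eq, Pi.mul_apply, Pi.add_apply, Pi.sub_apply, Pi.pow_apply]; push_cast; ring
    have h := deriv_pos_aux
      (f := fun y => 2 * Real.sinh y ^ 2 * Real.cosh y + Real.sinh y ^ 2
        - y ^ 2 * Real.cosh y ^ 2 - 2 * y ^ 2 * Real.cosh y)
      (f' := fun y => 4 * Real.sinh y * Real.cosh y ^ 2 + 2 * Real.sinh y ^ 3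
          + 2 * Real.sinh y * Real.cosh y - 2 * y * Real.cosh y ^ 2
          - 2 * y ^ 2 * Real.cosh y * Real.sinh y - 4 * y * Real.cosh y
          - 2 * y ^ 2 * Real.sinh y)
      (fun y => by
        have hsy := Real.hasDerivAt_sinh y
        have hcy := Real.hasDerivAt_cosh y
        have hid := hasDerivAt_id y
        have h1 := (((((hsy.pow 2).const_mul 2).mul hcy).add (hsy.pow 2)).sub
          ((hid.pow 2).mul (hcy.pow 2))).sub (((hid.pow 2).const_mul 2).mul hcy)
        convert h1 using 1
        all_goals try with_reducible_and_instances rfl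
        all_goals try (funext z; rfl)
        all_goals simp only [id_eq, Pi.mul_apply, Pi.add_apply, Pi.sub_apply, Pi.pow_apply]; push_cast; ring)
      (by simp) hF1 x hx
    exact h
  constructor
  · rw [ht, gt_iff_lt, ← sub_pos]
    have heq : 2 * Real.sinh x / x + Real.sinh x / Real.cosh x / x
        - (2 * x / Real.sinh x + x / (Real.sinh x / Real.cosh x))
        = (2 * Real.sinh x ^ 2 * Real.cosh x + Real.sinh x ^ 2
          - x ^ 2 * Real.cosh x ^ 2 - 2 * x ^ 2 * Real.cosh x) / (x * Real.sinh x * Real.cosh x) := by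
      field_simp
      ring
    rw [heq]
    positivity
  · rw [ht, gt_iff_lt, ← sub_pos]
    have heq : 2 * x / Real.sinh x + x / (Real.sinh x / Real.cosh x) - 3
        = (x * (2 + Real.cosh x) - 3 * Real.sinh x) / Real.sinh x := by
      field_simp
    rw [heq]
    positivity
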